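/- Under the assumptions that W_λ : [0,∞) → (0,∞) is continuous nondecreasing with lim_{y→∞} W_λ(y + x)/W_λ(y) = e^{Φ_λ x} for all x ∈ ℝ (with W_λ = 0 on negatives), Z_λ(y) = 1 + λ∫₀^y W_λ, W := W_0 continuous nonnegative and bounded on [0, x], one has for each fixed x ≥ 0: lim_{a→−∞} [W_λ(x − a) − λ∫₀ˣ W_λ(z − a) W(x − z) dz] / Z_λ(−a) = (Φ_λ/λ)[e^{Φ_λ x} − λ∫₀ˣ e^{Φ_λ z} W(x − z) dz]. -/

import Mathlib

open MeasureTheory Set Filter intervalIntegral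

private lemma aux_claimA {Wl : ℝ → ℝ} {r y₁ : ℝ} (hr : 0 < r)
    (hstep : ∀ y, y₁ ≤ y → Wl (y - 1) ≤ r * Wl y) :
    ∀ k : ℕ, ∀ y : ℝ, y₁ + k ≤ y → Wl (y - k) ≤ r ^ k * Wl y := by
  intro k
  induction k with
  | zero => intro y hy; simp
  | succ k ih =>
    intro y hy
    have hk : (0:ℝ) ≤ k := Nat.cast_nonneg k
    push_cast at hy
    have h1 : y₁ + (k:ℝ) ≤ y - 1 := by linarith
    have h2 : y₁ ≤ y := by linarith
    have e : y - ((k:ℕ)+1 : ℕ) = (y - 1) - (k:ℕ) := by push_cast; ring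
    calc Wl (y - ((k:ℕ)+1 : ℕ)) = Wl ((y - 1) - k) := by rw [e]
      _ ≤ r ^ k * Wl (y - 1) := ih _ h1
      _ ≤ r ^ k * (r * Wl y) :=
          mul_le_mul_of_nonneg_left (hstep y h2) (pow_nonneg hr.le k)
      _ = r ^ (k+1) * Wl y := by ring

/-- Remark 4.4 of the paper: as `a → −∞`,
`[W_λ(x−a) − λ∫₀ˣ W_λ(z−a)W(x−z)dz]/Z_λ(−a) → (Φ_λ/λ)[e^{Φ_λ x} − λ∫₀ˣ e^{Φ_λ z}W(x−z)dz]`. -/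
theorem omega_over_Z_limit_at_minus_infty
    (lam Φ : ℝ) (hlam : 0 < lam) (hΦ : 0 < Φ) (x : ℝ) (hx : 0 ≤ x)
    (Wl W : ℝ → ℝ)
    (hWl_zero : ∀ y < 0, Wl y = 0)
    (hWl_pos : ∀ y ≥ 0, 0 < Wl y)
    (hWl_cont : ContinuousOn Wl (Ici (0 : ℝ)))
    (hWl_mono : MonotoneOn Wl (Ici (0 : ℝ)))
    (hratio : ∀ u : ℝ, Tendsto (fun y => Wl (y + u) / Wl y) atTop (nhds (Real.exp (Φ * u))))
    (hW_cont : ContinuousOn W (Icc 0 x))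
    (hW_nonneg : ∀ z, 0 ≤ W z)
    (hW_bdd : ∃ M, ∀ z ∈ Icc (0 : ℝ) x, W z ≤ M) :
    Tendsto (fun a =>
        (Wl (x - a) - lam * ∫ z in (0 : ℝ)..x, Wl (z - a) * W (x - z)) /
          (1 + lam * ∫ u in (0 : ℝ)..(-a), Wl u))
      atBot
      (nhds ((Φ / lam) *
        (Real.exp (Φ * x) - lam * ∫ z in (0 : ℝ)..x, Real.exp (Φ * z) * W (x - z)))) := by
  obtain ⟨M, hM⟩ := hW_bdd
  have hM0 : 0 ≤ M := le_trans (hW_nonneg 0) (hM 0 ⟨le_refl _, hx⟩)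
  -- global nonneg and monotone
  have hWl_nonneg : ∀ y, 0 ≤ Wl y := by
    intro y
    rcases lt_or_ge y 0 with h | h
    · rw [hWl_zero y h]
    · exact (hWl_pos y h).le
  have hWl_monoG : Monotone Wl := by
    intro a b hab
    rcases lt_or_ge a 0 with ha | ha
    · rw [hWl_zero a ha]; exact hWl_nonneg b
    · exact hWl_mono ha (le_trans ha hab) hab
  have hWl_meas : Measurable Wl := hWl_monoG.measurable
  -- step estimate
  set r : ℝ := Real.exp (-(Φ/2)) with hr_def
  have hr_pos : 0 < r := Real.exp_pos _
  have hstep_ev : ∀ᶠ y in atTop, Wl (y + (-1)) / Wl y < r := by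
    refine (hratio (-1)).eventually_lt_const ?_
    rw [hr_def]
    apply Real.exp_lt_exp.mpr
    linarith
  obtain ⟨y₀, hy₀⟩ := eventually_atTop.mp hstep_ev
  set y₁ : ℝ := max y₀ 1 with hy₁_def
  have hy₁_ge1 : (1:ℝ) ≤ y₁ := le_max_right _ _
  have hy₁_pos : (0:ℝ) < y₁ := lt_of_lt_of_le one_pos hy₁_ge1
  have hstep : ∀ y, y₁ ≤ y → Wl (y - 1) ≤ r * Wl y := by
    intro y hy
    have h1 : Wl (y + (-1)) / Wl y < r := hy₀ y (le_trans (le_max_left _ _) hy)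
    have hWy : 0 < Wl y := hWl_pos y (le_trans hy₁_pos.le hy)
    have := (div_lt_iff₀ hWy).mp h1
    rw [← sub_eq_add_neg] at this
    linarith
  have claimA := aux_claimA hr_pos hstep
  -- r ^ k = exp (-(Φ/2) * k)
  have hrpow : ∀ k : ℕ, r ^ k = Real.exp (-(Φ/2) * k) := by
    intro k
    rw [hr_def, ← Real.exp_nat_mul]
    ring_nf
  -- Claim B : growth
  have claimB : ∀ y, y₁ ≤ y → Wl y₁ * Real.exp ((Φ/2) * (y - y₁ - 1)) ≤ Wl y := by
    intro y hy
    set k : ℕ := ⌊y - y₁⌋₊ with hk_def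
    have hyk : (k:ℝ) ≤ y - y₁ := Nat.floor_le (by linarith)
    have hyk2 : y - y₁ - 1 < k := Nat.sub_one_lt_floor _
    have hA := claimA k y (by linarith)
    have h1 : Wl y₁ ≤ Wl (y - k) := hWl_mono (mem_Ici.mpr hy₁_pos.le)
      (by simp only [mem_Ici]; linarith) (by linarith)
    have h2 : Wl y₁ ≤ Real.exp (-(Φ/2) * k) * Wl y := by
      rw [← hrpow]; exact le_trans h1 hA
    have hWy : 0 < Wl y := hWl_pos y (by linarith)
    have h3 : Real.exp ((Φ/2) * k) * Wl y₁ ≤ Wl y := by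
      have hE : (0:ℝ) ≤ Real.exp ((Φ/2) * k) := (Real.exp_pos _).le
      calc Real.exp ((Φ/2)*k) * Wl y₁
          ≤ Real.exp ((Φ/2)*k) * (Real.exp (-(Φ/2)*k) * Wl y) :=
            mul_le_mul_of_nonneg_left h2 hE
        _ = Real.exp ((Φ/2)*k + -(Φ/2)*k) * Wl y := by rw [← mul_assoc, ← Real.exp_add]
        _ = Wl y := by
            have he : (Φ/2)*(k:ℝ) + -(Φ/2)*(k:ℝ) = 0 := by ring
            rw [he, Real.exp_zero, one_mul]
    calc Wl y₁ * Real.exp ((Φ/2) * (y - y₁ - 1))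
        ≤ Wl y₁ * Real.exp ((Φ/2) * k) := by
          apply mul_le_mul_of_nonneg_left _ (hWl_nonneg y₁)
          apply Real.exp_le_exp.mpr
          have : 0 < Φ/2 := by linarith
          nlinarith
      _ = Real.exp ((Φ/2) * k) * Wl y₁ := mul_comm _ _
      _ ≤ Wl y := h3
  -- Claim C : domination
  set C : ℝ := Real.exp ((Φ/2) * (y₁ + 1)) with hC_def
  have hC_pos : 0 < C := Real.exp_pos _
  have claimC : ∀ y, y₁ ≤ y → ∀ u, 0 ≤ u → u ≤ y →
      Wl (y - u) ≤ C * Real.exp (-(Φ/2) * u) * Wl y := by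
    intro y hy u hu huy
    have hWy : 0 < Wl y := hWl_pos y (by linarith)
    rcases le_or_gt u (y - y₁) with hcase | hcase
    · -- u ≤ y - y₁
      set k : ℕ := ⌊u⌋₊ with hk_def
      have hk1 : (k:ℝ) ≤ u := Nat.floor_le hu
      have hk2 : u - 1 < k := Nat.sub_one_lt_floor _
      have h1 : Wl (y - u) ≤ Wl (y - k) := hWl_mono
        (by simp only [mem_Ici]; linarith) (by simp only [mem_Ici]; linarith) (by linarith)
      have h2 := claimA k y (by linarith)
      rw [hrpow] at h2
      have h3 : Real.exp (-(Φ/2) * k) ≤ Real.exp (Φ/2) * Real.exp (-(Φ/2) * u) := by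
        rw [← Real.exp_add]
        apply Real.exp_le_exp.mpr
        nlinarith
      have h4 : Real.exp (Φ/2) ≤ C := by
        rw [hC_def]
        apply Real.exp_le_exp.mpr
        nlinarith
      calc Wl (y - u) ≤ Real.exp (-(Φ/2) * k) * Wl y := le_trans h1 h2
        _ ≤ (Real.exp (Φ/2) * Real.exp (-(Φ/2) * u)) * Wl y :=
            mul_le_mul_of_nonneg_right h3 hWy.le
        _ ≤ (C * Real.exp (-(Φ/2) * u)) * Wl y := by
            apply mul_le_mul_of_nonneg_right _ hWy.le
            exact mul_le_mul_of_nonneg_right h4 (Real.exp_pos _).le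
        _ = C * Real.exp (-(Φ/2) * u) * Wl y := rfl
    · -- y - y₁ < u
      have h1 : Wl (y - u) ≤ Wl y₁ := by
        rcases lt_or_ge (y - u) 0 with hneg | hpos
        · rw [hWl_zero _ hneg]; exact hWl_nonneg y₁
        · exact hWl_mono (by simpa using hpos) (by simp only [mem_Ici]; linarith) (by linarith)
      have h2 := claimB y hy
      calc Wl (y - u) ≤ Wl y₁ := h1
        _ ≤ Wl y₁ * Real.exp ((Φ/2) * (y - u)) := by
            nth_rewrite 1 [← mul_one (Wl y₁)]
            apply mul_le_mul_of_nonneg_left _ (hWl_nonneg y₁)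
            apply Real.one_le_exp
            nlinarith
        _ = (Wl y₁ * Real.exp ((Φ/2) * (y - y₁ - 1))) *
              (C * Real.exp (-(Φ/2) * u)) := by
            have hexp : Real.exp ((Φ/2) * (y - u)) =
                Real.exp ((Φ/2)*(y-y₁-1)) * (C * Real.exp (-(Φ/2)*u)) := by
              rw [hC_def, ← Real.exp_add, ← Real.exp_add]
              congr 1
              ring
            rw [hexp]; ring
        _ ≤ Wl y * (C * Real.exp (-(Φ/2) * u)) := by
            apply mul_le_mul_of_nonneg_right h2
            positivity
        _ = C * Real.exp (-(Φ/2) * u) * Wl y := by ring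
  -- Wl tends to infinity
  have hWlTop : Tendsto Wl atTop atTop := by
    have hgrow : Tendsto (fun y => Wl y₁ * Real.exp ((Φ/2) * (y - y₁ - 1))) atTop atTop := by
      apply Tendsto.const_mul_atTop (hWl_pos y₁ hy₁_pos.le)
      apply Real.tendsto_exp_atTop.comp
      apply Tendsto.const_mul_atTop (by linarith : (0:ℝ) < Φ/2)
      have h0 : Tendsto (fun y : ℝ => y + (-y₁ - 1)) atTop atTop :=
        tendsto_atTop_add_const_right _ _ tendsto_id
      exact h0.congr (fun y => by ring)
    exact tendsto_atTop_mono' atTop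
      (eventually_atTop.mpr ⟨y₁, fun y hy => claimB y hy⟩) hgrow
  have hWlinv : Tendsto (fun y => (Wl y)⁻¹) atTop (nhds 0) :=
    tendsto_inv_atTop_zero.comp hWlTop
  -- the measure and the family for the dominated convergence argument
  set μ : Measure ℝ := volume.restrict (Ioi (0:ℝ)) with hμ_def
  set F : ℝ → ℝ → ℝ :=
    fun y u => (Ioc (0:ℝ) y).indicator (fun u => Wl (y - u) / Wl y) u with hF_def
  have hIexp : (∫ u in Ioi (0:ℝ), Real.exp (Φ * -u)) = Φ⁻¹ := by
    have h1 : (∫ u in Ioi (0:ℝ), Real.exp (-(Φ * u)))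
        = Φ⁻¹ • ∫ t in Ioi (Φ * 0), Real.exp (-t) :=
      integral_comp_mul_left_Ioi (fun t => Real.exp (-t)) 0 hΦ
    rw [mul_zero, integral_exp_neg_Ioi, neg_zero, Real.exp_zero, smul_eq_mul, mul_one] at h1
    rw [← h1]
    congr 1
    funext u
    rw [mul_neg]
  have hDCT : Tendsto (fun y => ∫ u, F y u ∂μ) atTop
      (nhds (∫ u in Ioi (0:ℝ), Real.exp (Φ * -u))) := by
    apply MeasureTheory.tendsto_integral_filter_of_dominated_convergence
      (fun u => C * Real.exp (-(Φ/2) * u))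
    · filter_upwards with y
      exact (((hWl_meas.comp (measurable_const.sub measurable_id)).div_const _).indicator
        measurableSet_Ioc).aestronglyMeasurable
    · filter_upwards [eventually_ge_atTop y₁] with y hy
      rw [hμ_def, ae_restrict_iff' measurableSet_Ioi]
      filter_upwards with u hu
      by_cases hmem : u ∈ Ioc (0:ℝ) y
      · rw [hF_def]
        simp only [indicator_of_mem hmem]
        have hWy : 0 < Wl y := hWl_pos y (by linarith)
        have h1 := claimC y hy u hmem.1.le hmem.2
        rw [Real.norm_eq_abs, abs_of_nonneg (div_nonneg (hWl_nonneg _) hWy.le),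
          div_le_iff₀ hWy]
        exact h1
      · rw [hF_def]
        simp only [indicator_of_notMem hmem]
        rw [norm_zero]
        positivity
    · exact (exp_neg_integrableOn_Ioi 0 (by linarith : (0:ℝ) < Φ/2)).const_mul C
    · rw [hμ_def, ae_restrict_iff' measurableSet_Ioi]
      filter_upwards with u hu
      have h := hratio (-u)
      rw [mul_neg] at h
      have h' : Real.exp (Φ * -u) = Real.exp (-(Φ * u)) := by rw [mul_neg]
      rw [h']
      apply Tendsto.congr' _ h
      filter_upwards [eventually_ge_atTop u] with y hy
      have hmem : u ∈ Ioc (0:ℝ) y := ⟨hu, hy⟩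
      rw [hF_def]
      simp only [indicator_of_mem hmem, ← sub_eq_add_neg]
  have hEq : ∀ᶠ y in atTop, (∫ u, F y u ∂μ) = (∫ u in (0:ℝ)..y, Wl u) / Wl y := by
    filter_upwards [eventually_ge_atTop (0:ℝ)] with y hy
    rw [hF_def, hμ_def, MeasureTheory.integral_indicator measurableSet_Ioc,
      Measure.restrict_restrict measurableSet_Ioc,
      inter_eq_left.mpr Ioc_subset_Ioi_self, MeasureTheory.integral_div]
    congr 1
    rw [← intervalIntegral.integral_of_le hy,
      intervalIntegral.integral_comp_sub_left (fun u => Wl u) y]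
    norm_num
  have hA : Tendsto (fun y => (∫ u in (0:ℝ)..y, Wl u) / Wl y) atTop (nhds Φ⁻¹) := by
    rw [← hIexp]
    exact Tendsto.congr' hEq hDCT
  have hDen : Tendsto (fun y => (1 + lam * ∫ u in (0:ℝ)..y, Wl u) / Wl y) atTop
      (nhds (lam / Φ)) := by
    have h1 : Tendsto (fun y => (Wl y)⁻¹ + lam * ((∫ u in (0:ℝ)..y, Wl u) / Wl y)) atTop
        (nhds (0 + lam * Φ⁻¹)) := hWlinv.add (hA.const_mul lam)
    rw [zero_add, ← div_eq_mul_inv] at h1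
    apply h1.congr
    intro y
    rw [add_div, mul_div_assoc, one_div]
  have hDenInv : Tendsto (fun y => Wl y / (1 + lam * ∫ u in (0:ℝ)..y, Wl u)) atTop
      (nhds (Φ / lam)) := by
    have h2 := hDen.inv₀ (by positivity : lam / Φ ≠ 0)
    rw [inv_div] at h2
    apply h2.congr
    intro y
    rw [inv_div]
  have hNum1 : Tendsto (fun y => Wl (x + y) / Wl y) atTop (nhds (Real.exp (Φ * x))) := by
    apply (hratio x).congr
    intro y
    rw [add_comm]
  set K : ℝ := Real.exp (Φ * x) + 1 with hK_def
  have hK_pos : 0 < K := by positivity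
  have hKev : ∀ᶠ y in atTop, Wl (x + y) / Wl y < K :=
    hNum1.eventually_lt_const (by rw [hK_def]; linarith)
  obtain ⟨y₂', hy₂'⟩ := eventually_atTop.mp hKev
  set y₂ : ℝ := max y₂' 0 with hy₂_def
  have hWcomp : ContinuousOn (fun z => W (x - z)) (Icc 0 x) := by
    apply hW_cont.comp (continuous_const.sub continuous_id).continuousOn
    intro z hz
    simp only [mem_Icc, id_eq, Pi.sub_apply] at hz ⊢
    constructor <;> linarith [hz.1, hz.2]
  have hWmeas : AEStronglyMeasurable (fun z => W (x - z)) (volume.restrict (Set.uIoc (0:ℝ) x)) := by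
    rw [uIoc_of_le hx]
    exact ((hWcomp.mono Ioc_subset_Icc_self).aemeasurable measurableSet_Ioc).aestronglyMeasurable
  have hNum2 : Tendsto (fun y => ∫ z in (0:ℝ)..x, (Wl (z + y) / Wl y) * W (x - z)) atTop
      (nhds (∫ z in (0:ℝ)..x, Real.exp (Φ * z) * W (x - z))) := by
    apply intervalIntegral.tendsto_integral_filter_of_dominated_convergence (fun _ => K * M)
    · filter_upwards with y
      exact (((hWl_meas.comp (measurable_id.add_const y)).div_const _).aemeasurable.mul
        hWmeas.aemeasurable).aestronglyMeasurable
    · filter_upwards [eventually_ge_atTop y₂] with y hy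
      filter_upwards with z hz
      rw [uIoc_of_le hx] at hz
      have hy0 : (0:ℝ) ≤ y := le_trans (le_max_right _ _) hy
      have hWy : 0 < Wl y := hWl_pos y hy0
      have h1 : Wl (z + y) ≤ Wl (x + y) := hWl_monoG (by linarith [hz.2])
      have h2 : Wl (x + y) / Wl y ≤ K := (hy₂' y (le_trans (le_max_left _ _) hy)).le
      have h3 : Wl (z + y) / Wl y ≤ K := le_trans (by gcongr) h2
      rw [Real.norm_eq_abs, abs_of_nonneg
        (mul_nonneg (div_nonneg (hWl_nonneg _) hWy.le) (hW_nonneg _))]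
      have hxz : x - z ∈ Icc (0:ℝ) x := ⟨by linarith [hz.2], by linarith [hz.1.le]⟩
      exact mul_le_mul h3 (hM _ hxz) (hW_nonneg _) hK_pos.le
    · exact intervalIntegrable_const
    · filter_upwards with z hz
      exact (((hratio z).congr (fun y => by rw [add_comm])).mul_const (W (x - z)))
  have hNum : Tendsto (fun y =>
      (Wl (x + y) - lam * ∫ z in (0:ℝ)..x, Wl (z + y) * W (x - z)) / Wl y) atTop
      (nhds (Real.exp (Φ * x) - lam * ∫ z in (0:ℝ)..x, Real.exp (Φ * z) * W (x - z))) := by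
    have h := hNum1.sub (hNum2.const_mul lam)
    apply h.congr
    intro y
    have hI : (∫ z in (0:ℝ)..x, (Wl (z + y) / Wl y) * W (x - z))
        = (∫ z in (0:ℝ)..x, Wl (z + y) * W (x - z)) / Wl y := by
      rw [← intervalIntegral.integral_div]
      simp only [div_mul_eq_mul_div]
    rw [hI, sub_div, mul_div_assoc]
  have hG : Tendsto (fun y =>
      (Wl (x + y) - lam * ∫ z in (0:ℝ)..x, Wl (z + y) * W (x - z)) /
        (1 + lam * ∫ u in (0:ℝ)..y, Wl u)) atTop
      (nhds ((Real.exp (Φ * x) - lam * ∫ z in (0:ℝ)..x, Real.exp (Φ * z) * W (x - z))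
        * (Φ / lam))) := by
    have h := hNum.mul hDenInv
    apply Tendsto.congr' _ h
    filter_upwards [eventually_ge_atTop y₁] with y hy
    have hWy : Wl y ≠ 0 := (hWl_pos y (by linarith)).ne'
    rw [div_mul_div_comm, mul_comm _ (Wl y), mul_div_mul_left _ _ hWy]
  have hfinal := hG.comp tendsto_neg_atBot_atTop
  have heq : (fun a : ℝ =>
      (Wl (x - a) - lam * ∫ z in (0 : ℝ)..x, Wl (z - a) * W (x - z)) /
        (1 + lam * ∫ u in (0 : ℝ)..(-a), Wl u)) =
      ((fun y => (Wl (x + y) - lam * ∫ z in (0:ℝ)..x, Wl (z + y) * W (x - z)) /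
        (1 + lam * ∫ u in (0:ℝ)..y, Wl u)) ∘ fun a : ℝ => -a) := by
    funext a
    simp only [Function.comp_apply, sub_eq_add_neg]
  rw [heq, mul_comm (Φ / lam)]
  exact hfinal
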